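/- For every integer r ≥ 3, the function c ↦ φ_r(c) is continuous on the open interval (0, 1/2). -/

import Mathlib

/-- `ξ(c) = ⌈1/(1 - 2c)⌉`. -/
noncomputable def xi (c : ℝ) : ℕ := ⌈1 / (1 - 2 * c)⌉₊

/-- `√(1 - 2 ξ(c) c / (ξ(c) - 1))`. -/
noncomputable def sqc (c : ℝ) : ℝ :=
  Real.sqrt (1 - 2 * (xi c : ℝ) * c / ((xi c : ℝ) - 1))

/-- The large coordinate `x` of the optimal vector `x_c`. -/
noncomputable def xval (c : ℝ) : ℝ := 1 / (xi c : ℝ) + (1 / (xi c : ℝ)) * sqc c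

/-- The small coordinate `y` of the optimal vector `x_c`. -/
noncomputable def yval (c : ℝ) : ℝ :=
  1 / (xi c : ℝ) - (((xi c : ℝ) - 1) / (xi c : ℝ)) * sqc c

/-- `φ_r(c) = C(s-1, r) x^r + C(s-1, r-1) x^{r-1} y` where `s = ξ(c)`. -/
noncomputable def phiF (r : ℕ) (c : ℝ) : ℝ :=
  ((xi c - 1).choose r : ℝ) * xval c ^ r +
    ((xi c - 1).choose (r - 1) : ℝ) * xval c ^ (r - 1) * yval c

/-- The same formula with a fixed value `s` in place of `xi c`. -/
noncomputable def gfun (r s : ℕ) (c : ℝ) : ℝ :=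
  ((s - 1).choose r : ℝ) *
      (1 / (s : ℝ) + (1 / (s : ℝ)) * Real.sqrt (1 - 2 * (s : ℝ) * c / ((s : ℝ) - 1))) ^ r +
    ((s - 1).choose (r - 1) : ℝ) *
      (1 / (s : ℝ) + (1 / (s : ℝ)) * Real.sqrt (1 - 2 * (s : ℝ) * c / ((s : ℝ) - 1))) ^ (r - 1) *
      (1 / (s : ℝ) - (((s : ℝ) - 1) / (s : ℝ)) * Real.sqrt (1 - 2 * (s : ℝ) * c / ((s : ℝ) - 1)))

lemma gfun_continuous (r s : ℕ) : Continuous (gfun r s) := by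
  have h : Continuous fun c : ℝ => Real.sqrt (1 - 2 * (s : ℝ) * c / ((s : ℝ) - 1)) :=
    Real.continuous_sqrt.comp (by fun_prop)
  unfold gfun
  fun_prop

lemma phiF_eq_gfun {r s : ℕ} {c : ℝ} (h : xi c = s) : phiF r c = gfun r s c := by
  simp only [phiF, gfun, xval, yval, sqc, h]

/-- Right endpoint of the interval where `xi = s`. -/
noncomputable def B (s : ℕ) : ℝ := ((s : ℝ) - 1) / (2 * s)

lemma B_lt_half {s : ℕ} (hs : 1 ≤ s) : B s < 1 / 2 := by
  have h : (0 : ℝ) < s := by exact_mod_cast hs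
  rw [B, div_lt_iff₀ (by linarith)]
  ring_nf
  linarith

lemma B_nonneg {s : ℕ} (hs : 1 ≤ s) : 0 ≤ B s := by
  have h : (1 : ℝ) ≤ s := by exact_mod_cast hs
  exact div_nonneg (by linarith) (by linarith)

lemma B_lt_B {s t : ℕ} (hs : 1 ≤ s) (hst : s < t) : B s < B t := by
  have h1 : (1 : ℝ) ≤ s := by exact_mod_cast hs
  have h2 : (s : ℝ) < t := by exact_mod_cast hst
  rw [B, B, div_lt_div_iff₀ (by linarith) (by linarith)]
  nlinarith

lemma xi_eq_iff {c : ℝ} (hc0 : 0 < c) (hc1 : c < 1 / 2) {s : ℕ} (hs : 2 ≤ s) :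
    xi c = s ↔ B (s - 1) < c ∧ c ≤ B s := by
  have h1 : (0 : ℝ) < 1 - 2 * c := by linarith
  have hsR : (2 : ℝ) ≤ s := by exact_mod_cast hs
  have hcast : ((s - 1 : ℕ) : ℝ) = (s : ℝ) - 1 := by
    have : 1 ≤ s := by omega
    push_cast [this]; ring
  rw [xi, Nat.ceil_eq_iff (by omega)]
  rw [hcast]
  constructor
  · rintro ⟨ha, hb⟩
    rw [div_le_iff₀ h1] at hb
    rw [lt_div_iff₀ h1] at ha
    constructor
    · rw [B, hcast, div_lt_iff₀ (by linarith)]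
      nlinarith
    · rw [B, le_div_iff₀ (by linarith)]
      nlinarith
  · rintro ⟨ha, hb⟩
    rw [B, hcast, div_lt_iff₀ (by linarith)] at ha
    rw [B, le_div_iff₀ (by linarith)] at hb
    constructor
    · rw [lt_div_iff₀ h1]; nlinarith
    · rw [div_le_iff₀ h1]; nlinarith

lemma xi_ge_two {c : ℝ} (hc0 : 0 < c) (hc1 : c < 1 / 2) : 2 ≤ xi c := by
  have h1 : (0 : ℝ) < 1 - 2 * c := by linarith
  have : (1 : ℝ) < 1 / (1 - 2 * c) := by
    rw [lt_div_iff₀ h1]; linarith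
  have := Nat.lt_ceil.mpr (by exact_mod_cast this : ((1 : ℕ) : ℝ) < 1 / (1 - 2 * c))
  unfold xi
  omega

/-- The key matching identity at the breakpoint `c = B s`. -/
lemma gfun_match {r s : ℕ} (hr : 1 ≤ r) (hs : 2 ≤ s) :
    gfun r s (B s) = gfun r (s + 1) (B s) := by
  have hsR : (2 : ℝ) ≤ s := by exact_mod_cast hs
  have hs0 : (0 : ℝ) < s := by linarith
  have hs1 : (0 : ℝ) < (s : ℝ) - 1 := by linarith
  -- left side : sqrt argument is 0
  have hL : 1 - 2 * (s : ℝ) * B s / ((s : ℝ) - 1) = 0 := by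
    rw [B]; field_simp; ring
  -- right side : sqrt argument is (1/s)^2
  have hR : 1 - 2 * ((s : ℝ) + 1) * B s / (((s : ℝ) + 1) - 1) = (1 / s) ^ 2 := by
    rw [B, add_sub_cancel_right]; field_simp; ring
  have hsqR : Real.sqrt (1 - 2 * ((s + 1 : ℕ) : ℝ) * B s / (((s + 1 : ℕ) : ℝ) - 1))
      = 1 / s := by
    push_cast
    rw [hR, Real.sqrt_sq (by positivity)]
  obtain ⟨m, rfl⟩ : ∃ m, s = m + 2 := ⟨s - 2, by omega⟩
  obtain ⟨n, rfl⟩ : ∃ n, r = n + 1 := ⟨r - 1, by omega⟩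
  rw [gfun, gfun, hsqR]
  rw [show (1 : ℝ) - 2 * ((m + 2 : ℕ) : ℝ) * B (m + 2) / (((m + 2 : ℕ) : ℝ) - 1) = 0 by
    push_cast; push_cast at hL; linarith]
  rw [Real.sqrt_zero]
  simp only [Nat.add_sub_cancel, mul_zero, add_zero, sub_zero]
  have hx : 1 / ((m + 2 + 1 : ℕ) : ℝ) + 1 / ((m + 2 + 1 : ℕ) : ℝ) * (1 / ((m + 2 : ℕ) : ℝ))
      = 1 / ((m + 2 : ℕ) : ℝ) := by
    push_cast at hs0 ⊢
    field_simp
    try ring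
  have hy : 1 / ((m + 2 + 1 : ℕ) : ℝ)
      - (((m + 2 + 1 : ℕ) : ℝ) - 1) / ((m + 2 + 1 : ℕ) : ℝ) * (1 / ((m + 2 : ℕ) : ℝ)) = 0 := by
    push_cast at hs0 ⊢
    field_simp
    ring
  rw [hx, hy, mul_zero, add_zero]
  have hchoose : (m + 2).choose (n + 1) = (m + 1).choose (n + 1) + (m + 1).choose n := by
    exact (Nat.choose_succ_succ' (m + 1) n).trans (Nat.add_comm _ _)
  have : ((m + 2 + 1 - 1 : ℕ).choose (n + 1) : ℝ)
      = ((m + 1).choose (n + 1) : ℝ) + ((m + 1).choose n : ℝ) := by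
    norm_num [hchoose]
  rw [show m + 2 + 1 - 1 = m + 2 from rfl] at *
  rw [show (m + 2).choose (n + 1) = (m + 1).choose (n + 1) + (m + 1).choose n from hchoose]
  push_cast
  ring

theorem phiF_continuous (r : ℕ) (hr : 3 ≤ r) :
    ContinuousOn (phiF r) (Set.Ioo (0 : ℝ) (1 / 2)) := by
  intro c hc
  obtain ⟨hc0, hc1⟩ := hc
  set s := xi c with hsdef
  have hs2 : 2 ≤ s := xi_ge_two hc0 hc1
  have hs1 : 1 ≤ s - 1 := by omega
  obtain ⟨hlow, hhigh⟩ := (xi_eq_iff hc0 hc1 hs2).mp rfl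
  have hBlt : B s < 1 / 2 := B_lt_half (by omega)
  have hB0 : 0 ≤ B (s - 1) := B_nonneg hs1
  -- any point of `Ioc (B (s-1)) (B s)` has `xi = s`
  have hxi_on : ∀ c' : ℝ, B (s - 1) < c' → c' ≤ B s → xi c' = s := by
    intro c' h1 h2
    have h0' : 0 < c' := lt_of_le_of_lt hB0 h1
    have h1' : c' < 1 / 2 := lt_of_le_of_lt h2 hBlt
    exact (xi_eq_iff h0' h1' hs2).mpr ⟨h1, h2⟩
  rcases lt_or_eq_of_le hhigh with hlt | heq
  · -- interior case: `xi` is locally constant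
    have hmem : Set.Ioo (B (s - 1)) (B s) ∈ nhds c := Ioo_mem_nhds hlow hlt
    have heq : phiF r =ᶠ[nhds c] gfun r s := by
      filter_upwards [hmem] with c' hc'
      exact phiF_eq_gfun (hxi_on c' hc'.1 hc'.2.le)
    exact (((gfun_continuous r s).continuousAt).congr heq.symm).continuousWithinAt
  · -- boundary case: `c = B s`
    have hkey : gfun r s c = gfun r (s + 1) c := by
      rw [heq]; exact gfun_match (by omega) hs2
    have hphic : phiF r c = gfun r s c := phiF_eq_gfun rfl
    have hsplit : Set.Ioo (0 : ℝ) (1 / 2)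
        = (Set.Ioo (0 : ℝ) (1 / 2) ∩ Set.Iic c) ∪ (Set.Ioo (0 : ℝ) (1 / 2) ∩ Set.Ioi c) := by
      rw [← Set.inter_union_distrib_left, Set.Iic_union_Ioi, Set.inter_univ]
    rw [hsplit]
    apply ContinuousWithinAt.union
    · -- left part : equals `gfun r s`
      have hnb : Set.Ioi (B (s - 1)) ∈ nhds c := Ioi_mem_nhds hlow
      rw [← continuousWithinAt_inter hnb]
      apply ((gfun_continuous r s).continuousAt.continuousWithinAt).congr
      · rintro c' ⟨⟨_, hle⟩, hgt⟩
        exact phiF_eq_gfun (hxi_on c' hgt (hle.trans heq.le))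
      · exact hphic
    · -- right part : equals `gfun r (s+1)`
      have hBlt' : c < B (s + 1) := by rw [heq]; exact B_lt_B (by omega) (by omega)
      have hnb : Set.Iio (B (s + 1)) ∈ nhds c := Iio_mem_nhds hBlt'
      rw [← continuousWithinAt_inter hnb]
      apply ((gfun_continuous r (s + 1)).continuousAt.continuousWithinAt).congr
      · rintro c' ⟨⟨⟨h0', h1'⟩, hgt⟩, hlt'⟩
        apply phiF_eq_gfun
        apply (xi_eq_iff h0' h1' (by omega : 2 ≤ s + 1)).mpr
        refine ⟨?_, hlt'.le⟩
        rw [show s + 1 - 1 = s from rfl, ← heq]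
        exact hgt
      · rw [hphic, hkey]
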